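/- Let M be a 5-pole whose colouring set is contained in the colouring set of the 5-pole C5 consisting of a 5-cycle with one dangling edge at each vertex (in cyclic order). Then either Col(M) = ∅ or Col(M) = Col(C5). In particular, every colourable superpentagon is perfect. -/

import Mathlib

set_option maxRecDepth 10000
set_option synthInstance.maxHeartbeats 1000000
set_option synthInstance.maxSize 4096
set_option maxHeartbeats 4000000


/-- The Klein four-group `Z₂ × Z₂`; Tait colourings use its three nonzero
elements as colours. -/
abbrev Klein : Type := ZMod 2 × ZMod 2

/-- A (cubic) multipole: a finite set of vertices and edges, where each edge has
two ends (`fst` and `snd`), each of which is either incident with a vertex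
(`some v`) or free (`none`), the latter being a *semiedge*. -/
structure Multipole where
  V : Type
  E : Type
  [instVF : Fintype V]
  [instEF : Fintype E]
  [instVD : DecidableEq V]
  [instED : DecidableEq E]
  fst : E → Option V
  snd : E → Option V

attribute [instance] Multipole.instVF Multipole.instEF Multipole.instVD Multipole.instED

namespace Multipole

variable (M : Multipole)

/-- The end of edge `e` on side `b`. -/
def endAt (e : M.E) (b : Bool) : Option M.V := if b then M.fst e else M.snd e

/-- The number of edge ends incident with `v`. -/
def degree (v : M.V) : ℕ :=
  (Finset.univ.filter fun p : M.E × Bool => M.endAt p.1 p.2 = some v).card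

/-- Every vertex is incident with exactly three edge ends. -/
def IsCubic : Prop := ∀ v : M.V, M.degree v = 3

/-- No semiedges: every edge end is incident with a vertex (i.e. `M` is a graph). -/
def Closed : Prop := ∀ (e : M.E) (b : Bool), M.endAt e b ≠ none

/-- Edge `e` joins vertices `x` and `y`. -/
def Joins (e : M.E) (x y : M.V) : Prop :=
  (M.fst e = some x ∧ M.snd e = some y) ∨ (M.fst e = some y ∧ M.snd e = some x)

def Adj (x y : M.V) : Prop := ∃ e : M.E, M.Joins e x y

def Conn : Prop := ∀ x y : M.V, Relation.ReflTransGen M.Adj x y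

/-- A proper 3-edge-colouring (Tait colouring): every edge gets a nonzero
element of the Klein group and the edge ends meeting at any vertex get
pairwise distinct colours. -/
def Proper (φ : M.E → Klein) : Prop :=
  (∀ e, φ e ≠ 0) ∧
  ∀ (v : M.V) (p q : M.E × Bool),
    M.endAt p.1 p.2 = some v → M.endAt q.1 q.2 = some v → p ≠ q → φ p.1 ≠ φ q.1

def Colourable : Prop := ∃ φ : M.E → Klein, M.Proper φ

/-- A colouring viewed as a nowhere-zero `Z₂ × Z₂`-flow: nonzero colours whose
sum at each vertex is `0`.  At 3-valent vertices this is equivalent to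
properness; at a 2-valent vertex it forces the two incident edges to receive
equal colours, which is exactly the condition for the colouring to descend to
the cubic graph obtained by suppressing that vertex. -/
def ProperFlow (φ : M.E → Klein) : Prop :=
  (∀ e, φ e ≠ 0) ∧
  ∀ v : M.V, (∑ p : M.E × Bool, if M.endAt p.1 p.2 = some v then φ p.1 else 0) = 0

def FlowColourable : Prop := ∃ φ : M.E → Klein, M.ProperFlow φ

/-- A snark: a connected cubic graph without a proper 3-edge-colouring. -/
def IsSnark : Prop := M.IsCubic ∧ M.Closed ∧ M.Conn ∧ ¬ M.Colourable

/-- The number of semiedges of `M`. -/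
def semiendCount : ℕ :=
  (Finset.univ.filter fun p : M.E × Bool => M.endAt p.1 p.2 = none).card

/-- The number of semiedges of `M` whose edge is coloured `c`. -/
def semiendColourCount (φ : M.E → Klein) (c : Klein) : ℕ :=
  (Finset.univ.filter fun p : M.E × Bool => M.endAt p.1 p.2 = none ∧ φ p.1 = c).card

/-- The sum of the colours on the semiedges of `M`. -/
def semiSum (φ : M.E → Klein) : Klein :=
  ∑ p : M.E × Bool, if M.endAt p.1 p.2 = none then φ p.1 else 0

/-- Delete a set of vertices, retaining dangling edges; edges with no end
outside `S` are discarded. -/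
noncomputable def delVerts (S : Finset M.V) : Multipole := by
  classical
  exact
    { V := {x : M.V // x ∉ S}
      E := {e : M.E // ∃ (b : Bool) (x : M.V), M.endAt e b = some x ∧ x ∉ S}
      fst := fun e => match M.fst e.1 with
        | none => none
        | some x => if h : x ∈ S then none else some ⟨x, h⟩
      snd := fun e => match M.snd e.1 with
        | none => none
        | some x => if h : x ∈ S then none else some ⟨x, h⟩ }

/-- The flow through the connector of `M.delVerts S` consisting of the
semiedges formerly incident with the deleted vertex `u`. -/
noncomputable def connFlow (S : Finset M.V) (φ : (M.delVerts S).E → Klein) (u : M.V) : Klein :=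
  ∑ e : (M.delVerts S).E,
    ((if M.fst e.1 = some u then φ e else 0) + (if M.snd e.1 = some u then φ e else 0))

/-- Delete a single edge (keeping its end vertices). -/
def delEdge (e0 : M.E) : Multipole where
  V := M.V
  E := {e : M.E // e ≠ e0}
  fst := fun e => M.fst e.1
  snd := fun e => M.snd e.1

/-- Delete a pair of edges (keeping their end vertices). -/
def delPair (e1 e2 : M.E) : Multipole where
  V := M.V
  E := {e : M.E // e ≠ e1 ∧ e ≠ e2}
  fst := fun e => M.fst e.1
  snd := fun e => M.snd e.1

/-- Sever the edge `e0`: replace it by two dangling edges. -/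
def sever (e0 : M.E) : Multipole where
  V := M.V
  E := M.E ⊕ Unit
  fst := fun e => match e with
    | .inl f => M.fst f
    | .inr _ => M.snd e0
  snd := fun e => match e with
    | .inl f => if f = e0 then none else M.snd f
    | .inr _ => none

/-- The I-extension `G(e₁,e₂)`: subdivide `e₁` and `e₂` each with a new vertex
and join the two new vertices by a new edge. -/
def extend (e1 e2 : M.E) : Multipole where
  V := M.V ⊕ Fin 2
  E := M.E ⊕ Fin 3
  fst := fun e => match e with
    | .inl f => (M.fst f).map Sum.inl
    | .inr i => if i = 0 then some (Sum.inr 0)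
        else if i = 1 then some (Sum.inr 1) else some (Sum.inr 0)
  snd := fun e => match e with
    | .inl f => if f = e1 then some (Sum.inr 0)
        else if f = e2 then some (Sum.inr 1) else (M.snd f).map Sum.inl
    | .inr i => if i = 0 then (M.snd e1).map Sum.inl
        else if i = 1 then (M.snd e2).map Sum.inl else some (Sum.inr 1)

/-- A bicritical snark: a snark in which the removal of any two distinct
vertices leaves a 3-edge-colourable multipole. -/
def Bicritical : Prop :=
  M.IsSnark ∧ ∀ x y : M.V, x ≠ y → (M.delVerts {x, y}).Colourable

end Multipole

/-- The colouring set of the 5-pole `C₅` consisting of a 5-cycle with one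
dangling edge at each vertex, in cyclic order: `g j` is the colour of the
cycle edge from `v j` to `v (j+1)` and `t j` the colour of the dangling edge
at `v j`. -/
def C5col (t : Fin 5 → Klein) : Prop :=
  ∃ g : Fin 5 → Klein,
    (∀ j, g j ≠ 0) ∧ (∀ j, t j ≠ 0) ∧ ∀ j : Fin 5, g (j - 1) + g j + t j = 0

section TwoInvol
variable {A : Type} [Fintype A] (ρ τ : Equiv.Perm A)

lemma two_invol_aux (hρ2 : ∀ a, ρ (ρ a) = a) (hτ2 : ∀ a, τ (τ a) = a)
    (hρf : ∀ a, ρ a ≠ a) (p : A) (hp : τ p = p) :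
    ∃ q : A, τ q = q ∧ q ≠ p ∧ (∃ k : ℤ, ((τ * ρ) ^ k) p = q) ∧
      (∀ (k : ℤ), (∃ m : ℤ, ((τ * ρ) ^ m) p = ρ (((τ * ρ) ^ k) p)) ∧
                  (∃ m : ℤ, ((τ * ρ) ^ m) p = τ (((τ * ρ) ^ k) p))) ∧
      (∀ r, τ r = r → (∃ k : ℤ, ((τ * ρ) ^ k) p = r) → r = p ∨ r = q) := by
  classical
  set σ := τ * ρ with hσ
  have hτ1 : τ * τ = 1 := by ext a; simp [hτ2 a]
  have hρ1 : ρ * ρ = 1 := by ext a; simp [hρ2 a]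
  have hτinv : τ⁻¹ = τ := by rw [inv_eq_iff_mul_eq_one, hτ1]
  have hρinv : ρ⁻¹ = ρ := by rw [inv_eq_iff_mul_eq_one, hρ1]
  have hconjτ : τ * σ * τ⁻¹ = σ⁻¹ := by
    rw [hτinv, hσ, mul_inv_rev, hτinv, hρinv, ← mul_assoc, hτ1, one_mul]
  have hconjρ : ρ * σ * ρ⁻¹ = σ⁻¹ := by
    rw [hρinv, hσ, mul_inv_rev, hτinv, hρinv, mul_assoc, mul_assoc, hρ1, mul_one]
  have Padd : ∀ a b : ℤ, ((σ ^ (a + b) : Equiv.Perm A)) p = (σ ^ a) ((σ ^ b) p) := by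
    intro a b; rw [zpow_add, Equiv.Perm.mul_apply]
  have hρp : ρ p = (σ ^ (-1 : ℤ)) p := by
    simp [zpow_neg, hσ, mul_inv_rev, hτinv, hρinv, Equiv.Perm.mul_apply, hp]
  have keyτ : ∀ k : ℤ, τ ((σ ^ k) p) = (σ ^ (-k)) p := by
    intro k
    have h1 : τ * σ ^ k * τ⁻¹ = σ ^ (-k) := by rw [← conj_zpow, hconjτ, inv_zpow']
    have h2 := congrArg (fun f : Equiv.Perm A => f (τ p)) h1
    simpa [Equiv.Perm.mul_apply, hτinv, hp] using h2
  have keyρ : ∀ k : ℤ, ρ ((σ ^ k) p) = (σ ^ (-k-1)) p := by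
    intro k
    have h1 : ρ * σ ^ k * ρ⁻¹ = σ ^ (-k) := by rw [← conj_zpow, hconjρ, inv_zpow']
    have h2 := congrArg (fun f : Equiv.Perm A => f (ρ p)) h1
    simp only [Equiv.Perm.mul_apply, hρinv] at h2
    rw [hρ2, hρp, ← Padd] at h2
    rw [h2]; ring_nf
  have hper : ∃ n : ℕ, 0 < n ∧ ((σ ^ n : Equiv.Perm A)) p = p :=
    ⟨orderOf σ, orderOf_pos σ, by rw [pow_orderOf_eq_one]; rfl⟩
  set N := Nat.find hper with hNdef
  obtain ⟨hNpos, hNp⟩ : 0 < N ∧ ((σ ^ N : Equiv.Perm A)) p = p := Nat.find_spec hper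
  have hmin : ∀ m : ℕ, 0 < m → m < N → ((σ ^ m : Equiv.Perm A)) p ≠ p := fun m hm hmN hc =>
    Nat.find_min hper hmN ⟨hm, hc⟩
  have hpowN : ∀ c : ℕ, (((σ ^ N) ^ c : Equiv.Perm A)) p = p := by
    intro c
    induction c with
    | zero => simp
    | succ n ih => rw [pow_succ, Equiv.Perm.mul_apply, hNp, ih]
  have hdvd : ∀ m : ℕ, ((σ ^ m : Equiv.Perm A)) p = p ↔ N ∣ m := by
    intro m
    constructor
    · intro h
      rcases Nat.eq_zero_or_pos (m % N) with h0 | hpos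
      · exact Nat.dvd_of_mod_eq_zero h0
      · exfalso
        have hm : N * (m / N) + m % N = m := Nat.div_add_mod m N
        have h3 : ((σ ^ (N * (m / N) + m % N) : Equiv.Perm A)) p = p := by rw [hm]; exact h
        rw [pow_add, pow_mul, Equiv.Perm.mul_apply] at h3
        have h4 : ((σ ^ (m % N) : Equiv.Perm A)) p = p :=
          ((σ ^ N) ^ (m / N) : Equiv.Perm A).injective (by rw [h3, hpowN])
        exact hmin _ hpos (Nat.mod_lt _ hNpos) h4
    · rintro ⟨c, rfl⟩
      rw [pow_mul]; exact hpowN c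
  have hdvdZ : ∀ m : ℤ, ((σ ^ m : Equiv.Perm A)) p = p ↔ (N:ℤ) ∣ m := by
    have hneg : ∀ m : ℤ, ((σ ^ m : Equiv.Perm A)) p = p → ((σ ^ (-m) : Equiv.Perm A)) p = p := by
      intro m h
      conv_lhs => rw [← h]
      rw [← Equiv.Perm.mul_apply, ← zpow_add, neg_add_cancel, zpow_zero, Equiv.Perm.one_apply]
    intro m
    rcases Int.natAbs_eq m with he | he
    · rw [he, zpow_natCast, Int.natCast_dvd_natCast]; exact hdvd _
    · rw [he]
      constructor
      · intro h
        have h2 := hneg _ h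
        rw [neg_neg, zpow_natCast] at h2
        exact (Int.dvd_neg).2 (Int.natCast_dvd_natCast.2 ((hdvd _).1 h2))
      · intro h
        have h' : (N:ℤ) ∣ (m.natAbs : ℤ) := (Int.dvd_neg).1 h
        have h2 := (hdvd m.natAbs).2 (Int.natCast_dvd_natCast.1 h')
        apply hneg
        rw [zpow_natCast]; exact h2
  have hPinj : ∀ a b : ℤ, ((σ ^ a : Equiv.Perm A)) p = ((σ ^ b : Equiv.Perm A)) p ↔ (N:ℤ) ∣ (a - b) := by
    intro a b
    constructor
    · intro h
      have h2 : ((σ ^ (-b) : Equiv.Perm A)) ((σ ^ a : Equiv.Perm A) p) = ((σ ^ (-b) : Equiv.Perm A)) ((σ ^ b : Equiv.Perm A) p) := by rw [h]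
      rw [← Padd, ← Padd, neg_add_cancel, zpow_zero, Equiv.Perm.one_apply] at h2
      rw [show a - b = -b + a by ring]
      exact (hdvdZ _).1 h2
    · intro h
      have h2 : ((σ ^ (a - b) : Equiv.Perm A)) p = p := (hdvdZ _).2 h
      have h3 := congrArg (σ ^ b : Equiv.Perm A) h2
      rw [← Padd, show b + (a - b) = a by ring] at h3
      exact h3
  -- N even
  have hNeven : ∃ n : ℕ, 0 < n ∧ N = 2 * n := by
    rcases Nat.even_or_odd N with he | ho
    · obtain ⟨n, hn⟩ := he
      exact ⟨n, by omega, by omega⟩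
    · exfalso
      obtain ⟨u, hu⟩ := ho
      have hfp := hρf ((σ ^ (u:ℤ)) p)
      rw [keyρ] at hfp
      apply hfp
      rw [hPinj]
      exact ⟨-1, by omega⟩
  obtain ⟨n, hnpos, hNn⟩ := hNeven
  refine ⟨(σ ^ (n:ℤ)) p, ?_, ?_, ⟨(n:ℤ), rfl⟩, ?_, ?_⟩
  · rw [keyτ, hPinj, hNn]
    exact ⟨-1, by push_cast; ring⟩
  · intro hc
    have h1 := (hdvdZ _).1 hc
    rw [Int.natCast_dvd_natCast] at h1
    have := Nat.le_of_dvd hnpos h1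
    omega
  · intro k
    exact ⟨⟨-k-1, (keyρ k).symm⟩, ⟨-k, (keyτ k).symm⟩⟩
  · rintro r hr ⟨k, rfl⟩
    rw [keyτ, hPinj] at hr
    have h2k : (N:ℤ) ∣ 2 * k := by
      have : -k - k = -(2*k) := by ring
      rw [this, Int.dvd_neg] at hr; exact hr
    have hnk : (n:ℤ) ∣ k := by
      rw [hNn] at h2k; push_cast at h2k
      exact (mul_dvd_mul_iff_left (by norm_num : (2:ℤ) ≠ 0)).1 h2k
    obtain ⟨j, hj⟩ := hnk
    rcases Int.even_or_odd j with ⟨a, ha⟩ | ⟨a, ha⟩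
    · left
      have : ((σ ^ k : Equiv.Perm A)) p = ((σ ^ ((0:ℕ):ℤ) : Equiv.Perm A)) p := by
        rw [hPinj]
        refine ⟨a, ?_⟩
        push_cast
        rw [hj, ha, hNn]; push_cast; ring
      simpa using this
    · right
      rw [hPinj]
      refine ⟨a, ?_⟩
      rw [hj, ha, hNn]; push_cast; ring

end TwoInvol


section Kempe
variable (M : Multipole)

lemma klein_add_self (z : Klein) : z + z = 0 := by
  revert z; decide

lemma exists_unique_end (hM : M.IsCubic) (φ : M.E → Klein) (hφ : M.Proper φ)
    (v : M.V) (c : Klein) (hc : c ≠ 0) :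
    ∃! q : M.E × Bool, M.endAt q.1 q.2 = some v ∧ φ q.1 = c := by
  classical
  set F := (Finset.univ.filter fun p : M.E × Bool => M.endAt p.1 p.2 = some v) with hF
  have hcard : F.card = 3 := hM v
  have hinj : Set.InjOn (fun p : M.E × Bool => φ p.1) F := by
    intro a ha b hb hab
    by_contra hne
    exact hφ.2 v a b (Finset.mem_filter.1 ha).2 (Finset.mem_filter.1 hb).2 hne hab
  have himg : (F.image fun p : M.E × Bool => φ p.1) = Finset.univ.filter (fun c : Klein => c ≠ 0) := by
    apply Finset.eq_of_subset_of_card_le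
    · intro c hcmem
      obtain ⟨a, ha, rfl⟩ := Finset.mem_image.1 hcmem
      simp [hφ.1 a.1]
    · rw [Finset.card_image_of_injOn hinj, hcard]
      decide
  have hcF : c ∈ F.image fun p : M.E × Bool => φ p.1 := by
    rw [himg]; simp [hc]
  obtain ⟨a, haF, hac⟩ := Finset.mem_image.1 hcF
  refine ⟨a, ⟨(Finset.mem_filter.1 haF).2, hac⟩, ?_⟩
  intro b ⟨hbv, hbc⟩
  apply hinj (by simp [hF, hbv]) haF
  show φ b.1 = φ a.1
  rw [hac, hbc]

lemma kempe (hM : M.IsCubic) (φ : M.E → Klein) (hφ : M.Proper φ)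
    (s : Fin 5 → M.E × Bool)
    (hs1 : ∀ j, M.endAt (s j).1 (s j).2 = none)
    (hs2 : Function.Injective s)
    (hs3 : ∀ p : M.E × Bool, M.endAt p.1 p.2 = none → ∃ j, s j = p)
    (x y : Klein) (hx : x ≠ 0) (hy : y ≠ 0) (hxy : x ≠ y)
    (i : Fin 5) (hi : φ (s i).1 = x ∨ φ (s i).1 = y) :
    ∃ (j : Fin 5) (φ' : M.E → Klein), j ≠ i ∧ (φ (s j).1 = x ∨ φ (s j).1 = y) ∧ M.Proper φ' ∧
      (∀ k, φ' (s k).1 = if k = i ∨ k = j then φ (s k).1 + x + y else φ (s k).1) := by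
  classical
  set z := x + y with hz
  have hxz : x + z = y := by rw [hz, ← add_assoc, klein_add_self, zero_add]
  have hyz : y + z = x := by rw [hz, add_comm x y, ← add_assoc, klein_add_self, zero_add]
  have hzz : ∀ c : Klein, c + z + z = c := by
    intro c; rw [add_assoc, klein_add_self, add_zero]
  have hother : ∀ c : Klein, (c = x ∨ c = y) → ((c + z = x ∨ c + z = y) ∧ c + z ≠ 0 ∧ c + z ≠ c) := by
    rintro c (rfl | rfl)
    · refine ⟨Or.inr hxz, ?_, ?_⟩
      · rw [hxz]; exact hy
      · rw [hxz]; exact fun h => hxy h.symm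
    · refine ⟨Or.inl hyz, ?_, ?_⟩
      · rw [hyz]; exact hx
      · rw [hyz]; exact hxy
  set A := {a : M.E × Bool // φ a.1 = x ∨ φ a.1 = y} with hA
  have hρ2 : Function.Involutive (fun a : A => (⟨(a.1.1, !a.1.2), a.2⟩ : A)) := by
    intro a
    apply Subtype.ext
    simp
  set ρ : Equiv.Perm A := hρ2.toPerm _ with hρdef
  have hρapp : ∀ a : A, ρ a = ⟨(a.1.1, !a.1.2), a.2⟩ := fun a => rfl
  have hρf : ∀ a : A, ρ a ≠ a := by
    intro a h
    have h2 := congrArg (fun r : A => r.1.2) h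
    simp [hρapp] at h2
  have huniqEnd := exists_unique_end M hM φ hφ
  have hτex : ∀ a : A, ∃ b : A, (M.endAt a.1.1 a.1.2 = none → b = a) ∧
      (∀ v : M.V, M.endAt a.1.1 a.1.2 = some v →
        (M.endAt b.1.1 b.1.2 = some v ∧ φ b.1.1 = φ a.1.1 + z ∧
         ∀ b' : A, M.endAt b'.1.1 b'.1.2 = some v → φ b'.1.1 = φ a.1.1 + z → b = b')) := by
    intro a
    cases hv : M.endAt a.1.1 a.1.2 with
    | none =>
      exact ⟨a, fun _ => rfl, fun v h => nomatch h⟩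
    | some v =>
      obtain ⟨w, ⟨hw1, hw2⟩, hwu⟩ := huniqEnd v (φ a.1.1 + z) (hother _ a.2).2.1
      have hwA : φ w.1 = x ∨ φ w.1 = y := by
        rcases (hother _ a.2).1 with h | h
        · left; rw [hw2, h]
        · right; rw [hw2, h]
      refine ⟨⟨w, hwA⟩, (fun h => by cases h), fun v' hv' => ?_⟩
      · have hvv : v' = v := (Option.some_inj.1 hv').symm
        subst hvv
        refine ⟨hw1, hw2, fun b' hb1 hb2 => ?_⟩
        exact Subtype.ext (hwu b'.1 ⟨hb1, hb2⟩).symm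
  choose τfun hτnone hτsome using hτex
  have hτ2 : Function.Involutive τfun := by
    intro a
    cases hv : M.endAt a.1.1 a.1.2 with
    | none => rw [hτnone a hv, hτnone a hv]
    | some v =>
      obtain ⟨hb1, hb2, _⟩ := hτsome a v hv
      obtain ⟨_, _, hu⟩ := hτsome (τfun a) v hb1
      exact hu a hv (by rw [hb2, hzz])
  set τ : Equiv.Perm A := hτ2.toPerm _ with hτdef
  have hτapp : ∀ a : A, τ a = τfun a := fun a => rfl
  have hτfree : ∀ a : A, τfun a = a → M.endAt a.1.1 a.1.2 = none := by
    intro a h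
    cases hv : M.endAt a.1.1 a.1.2 with
    | none => rfl
    | some v =>
      obtain ⟨_, hb2, _⟩ := hτsome a v hv
      rw [h] at hb2
      exact absurd hb2.symm ((hother _ a.2).2.2)
  set p0 : A := ⟨s i, hi⟩ with hp0def
  have hp0fix : τ p0 = p0 := by
    rw [hτapp]
    exact hτnone p0 (hs1 i)
  obtain ⟨q, hqfix, hqne, ⟨kq, hkq⟩, hclosed, huniq2⟩ :=
    two_invol_aux ρ τ (fun a => hρ2 a) (fun a => hτ2 a) hρf p0 hp0fix
  set O : A → Prop := fun a => ∃ k : ℤ, ((τ * ρ) ^ k) p0 = a with hO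
  have hOp0 : O p0 := ⟨0, by simp⟩
  have hOτ : ∀ a, O a → O (τfun a) := by
    rintro a ⟨k, rfl⟩
    obtain ⟨m, hm⟩ := (hclosed k).2
    exact ⟨m, hm⟩
  have hOρ : ∀ a, O a → O (ρ a) := by
    rintro a ⟨k, rfl⟩
    obtain ⟨m, hm⟩ := (hclosed k).1
    exact ⟨m, hm⟩
  set Sedge : M.E → Prop := fun e => ∃ a : A, O a ∧ a.1.1 = e with hSedgeDef
  have hScol : ∀ e, Sedge e → (φ e = x ∨ φ e = y) := by
    rintro e ⟨a, _, rfl⟩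
    exact a.2
  have hOend : ∀ (P : M.E × Bool) (hc : φ P.1 = x ∨ φ P.1 = y), Sedge P.1 → O ⟨P, hc⟩ := by
    rintro P hc ⟨a, hOa, hae⟩
    by_cases hb : a.1.2 = P.2
    · have he : a = ⟨P, hc⟩ := by
        apply Subtype.ext
        show a.1 = P
        exact Prod.ext hae hb
      rw [← he]; exact hOa
    · have he : ρ a = ⟨P, hc⟩ := by
        apply Subtype.ext
        show (a.1.1, !a.1.2) = P
        have hb2 : (!a.1.2) = P.2 := by
          cases ha2 : a.1.2 <;> cases hP2 : P.2 <;> simp_all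
        exact Prod.ext hae hb2
      rw [← he]; exact hOρ a hOa
  set φ' : M.E → Klein := fun e => if Sedge e then φ e + z else φ e with hφ'def
  have hprop : ∀ (v : M.V) (P1 P2 : M.E × Bool), M.endAt P1.1 P1.2 = some v →
      M.endAt P2.1 P2.2 = some v → (φ P1.1 = x ∨ φ P1.1 = y) → (φ P2.1 = x ∨ φ P2.1 = y) →
      Sedge P1.1 → Sedge P2.1 := by
    intro v P1 P2 h1 h2 hc1 hc2 hS1
    by_cases hcc : φ P2.1 = φ P1.1
    · obtain ⟨w, hw, hwu⟩ := huniqEnd v (φ P1.1)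
        (by rcases hc1 with h | h <;> rw [h]; exacts [hx, hy])
      have e1 : P1 = w := hwu P1 ⟨h1, rfl⟩
      have e2 : P2 = w := hwu P2 ⟨h2, hcc⟩
      have e3 : P2 = P1 := by rw [e1, e2]
      rw [e3]; exact hS1
    · have hc2' : φ P2.1 = φ P1.1 + z := by
        rcases hc1 with h1' | h1' <;> rcases hc2 with h2' | h2'
        · exact absurd (h2'.trans h1'.symm) hcc
        · rw [h1', h2', hxz]
        · rw [h1', h2', hyz]
        · exact absurd (h2'.trans h1'.symm) hcc
      have hOe : O ⟨P1, hc1⟩ := hOend P1 hc1 hS1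
      obtain ⟨_, _, hu⟩ := hτsome ⟨P1, hc1⟩ v h1
      have hτeq : τfun ⟨P1, hc1⟩ = ⟨P2, hc2⟩ := hu ⟨P2, hc2⟩ h2 hc2'
      have hOe2 := hOτ _ hOe
      rw [hτeq] at hOe2
      exact ⟨_, hOe2, rfl⟩
  have hproper : M.Proper φ' := by
    constructor
    · intro e
      by_cases hS : Sedge e
      · rw [hφ'def]; simp only [if_pos hS]; exact (hother _ (hScol e hS)).2.1
      · rw [hφ'def]; simp only [if_neg hS]; exact hφ.1 e
    · intro v P1 P2 h1 h2 hne
      have hcol := hφ.2 v P1 P2 h1 h2 hne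
      by_cases hS1 : Sedge P1.1 <;> by_cases hS2 : Sedge P2.1
      · simp only [hφ'def, if_pos hS1, if_pos hS2]
        intro h; exact hcol (add_right_cancel h)
      · have hc1 := hScol _ hS1
        have hc2 : ¬ (φ P2.1 = x ∨ φ P2.1 = y) := fun hc2 =>
          hS2 (hprop v P1 P2 h1 h2 hc1 hc2 hS1)
        simp only [hφ'def, if_pos hS1, if_neg hS2]
        intro h
        apply hc2
        rw [← h]
        exact (hother _ hc1).1
      · have hc2 := hScol _ hS2
        have hc1 : ¬ (φ P1.1 = x ∨ φ P1.1 = y) := fun hc1 =>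
          hS1 (hprop v P2 P1 h2 h1 hc2 hc1 hS2)
        simp only [hφ'def, if_neg hS1, if_pos hS2]
        intro h
        apply hc1
        rw [h]
        exact (hother _ hc2).1
      · simp only [hφ'def, if_neg hS1, if_neg hS2]
        exact hcol
  have hqfree : M.endAt q.1.1 q.1.2 = none := hτfree q hqfix
  obtain ⟨j, hj⟩ := hs3 q.1 hqfree
  have hji : j ≠ i := by
    intro h
    apply hqne
    apply Subtype.ext
    rw [← hj, h]
  have hSi : Sedge (s i).1 := ⟨p0, hOp0, rfl⟩
  have hSj : Sedge (s j).1 := ⟨q, ⟨kq, hkq⟩, by rw [hj]⟩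
  have hcolj : φ (s j).1 = x ∨ φ (s j).1 = y := by rw [hj]; exact q.2
  refine ⟨j, φ', hji, hcolj, hproper, ?_⟩
  intro k
  by_cases hk : k = i ∨ k = j
  · have hSk : Sedge (s k).1 := by
      rcases hk with rfl | rfl
      exacts [hSi, hSj]
    simp only [hφ'def, if_pos hSk, if_pos hk]
    rw [hz]
    exact (add_assoc _ x y).symm
  · have hSk : ¬ Sedge (s k).1 := by
      intro hS
      have hck := hScol _ hS
      have hOk := hOend (s k) hck hS
      have hfix : τ (⟨s k, hck⟩ : A) = ⟨s k, hck⟩ := by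
        rw [hτapp]
        exact hτnone _ (hs1 k)
      rcases huniq2 _ hfix hOk with h | h
      · exact hk (Or.inl (hs2 (congrArg Subtype.val h)))
      · refine hk (Or.inr (hs2 ?_))
        rw [hj]
        exact congrArg Subtype.val h
    simp only [hφ'def, if_neg hSk, if_neg hk]

end Kempe

abbrev Col30 (t : Fin 5 → Klein) : Prop :=
  t = (![(0,1), (0,1), (0,1), (1,0), (1,1)] : Fin 5 → Klein) ∨
  t = (![(0,1), (0,1), (0,1), (1,1), (1,0)] : Fin 5 → Klein) ∨
  t = (![(0,1), (0,1), (1,0), (1,1), (0,1)] : Fin 5 → Klein) ∨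
  t = (![(0,1), (0,1), (1,1), (1,0), (0,1)] : Fin 5 → Klein) ∨
  t = (![(0,1), (1,0), (1,0), (1,0), (1,1)] : Fin 5 → Klein) ∨
  t = (![(0,1), (1,0), (1,1), (0,1), (0,1)] : Fin 5 → Klein) ∨
  t = (![(0,1), (1,0), (1,1), (1,1), (1,1)] : Fin 5 → Klein) ∨
  t = (![(0,1), (1,1), (1,0), (0,1), (0,1)] : Fin 5 → Klein) ∨
  t = (![(0,1), (1,1), (1,0), (1,0), (1,0)] : Fin 5 → Klein) ∨
  t = (![(0,1), (1,1), (1,1), (1,1), (1,0)] : Fin 5 → Klein) ∨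
  t = (![(1,0), (0,1), (0,1), (0,1), (1,1)] : Fin 5 → Klein) ∨
  t = (![(1,0), (0,1), (1,1), (1,0), (1,0)] : Fin 5 → Klein) ∨
  t = (![(1,0), (0,1), (1,1), (1,1), (1,1)] : Fin 5 → Klein) ∨
  t = (![(1,0), (1,0), (0,1), (1,1), (1,0)] : Fin 5 → Klein) ∨
  t = (![(1,0), (1,0), (1,0), (0,1), (1,1)] : Fin 5 → Klein) ∨
  t = (![(1,0), (1,0), (1,0), (1,1), (0,1)] : Fin 5 → Klein) ∨
  t = (![(1,0), (1,0), (1,1), (0,1), (1,0)] : Fin 5 → Klein) ∨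
  t = (![(1,0), (1,1), (0,1), (0,1), (0,1)] : Fin 5 → Klein) ∨
  t = (![(1,0), (1,1), (0,1), (1,0), (1,0)] : Fin 5 → Klein) ∨
  t = (![(1,0), (1,1), (1,1), (1,1), (0,1)] : Fin 5 → Klein) ∨
  t = (![(1,1), (0,1), (0,1), (0,1), (1,0)] : Fin 5 → Klein) ∨
  t = (![(1,1), (0,1), (1,0), (1,0), (1,0)] : Fin 5 → Klein) ∨
  t = (![(1,1), (0,1), (1,0), (1,1), (1,1)] : Fin 5 → Klein) ∨
  t = (![(1,1), (1,0), (0,1), (0,1), (0,1)] : Fin 5 → Klein) ∨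
  t = (![(1,1), (1,0), (0,1), (1,1), (1,1)] : Fin 5 → Klein) ∨
  t = (![(1,1), (1,0), (1,0), (1,0), (0,1)] : Fin 5 → Klein) ∨
  t = (![(1,1), (1,1), (0,1), (1,0), (1,1)] : Fin 5 → Klein) ∨
  t = (![(1,1), (1,1), (1,0), (0,1), (1,1)] : Fin 5 → Klein) ∨
  t = (![(1,1), (1,1), (1,1), (0,1), (1,0)] : Fin 5 → Klein) ∨
  t = (![(1,1), (1,1), (1,1), (1,0), (0,1)] : Fin 5 → Klein)

lemma klein_cancel (a b : Klein) (h : a + b = 0) : b = a := by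
  apply add_left_cancel (a := a)
  rw [h, klein_add_self]

lemma key30 : ∀ a b c d e : Klein, a ≠ 0 → b ≠ 0 → c ≠ 0 → d ≠ 0 → e ≠ 0 → e + a ≠ 0 → a + b ≠ 0 → b + c ≠ 0 → c + d ≠ 0 → d + e ≠ 0 →
    Col30 (![e + a, a + b, b + c, c + d, d + e] : Fin 5 → Klein) := by
  decide

lemma enum30 : ∀ t : Fin 5 → Klein, C5col t → Col30 t := by
  rintro t ⟨g, hg0, ht0, hsum⟩
  have hT : ∀ j, t j = g (j - 1) + g j := fun j => klein_cancel _ _ (hsum j)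
  have ht : t = ![g 4 + g 0, g 0 + g 1, g 1 + g 2, g 2 + g 3, g 3 + g 4] := by
    funext j
    fin_cases j
    · exact hT 0
    · exact hT 1
    · exact hT 2
    · exact hT 3
    · exact hT 4
  have hn : ∀ j : Fin 5, g (j - 1) + g j ≠ 0 := fun j => by rw [← hT j]; exact ht0 j
  rw [ht]
  exact key30 (g 0) (g 1) (g 2) (g 3) (g 4) (hg0 0) (hg0 1) (hg0 2) (hg0 3) (hg0 4)
    (hn 0) (hn 1) (hn 2) (hn 3) (hn 4)

/-- **Superpentagon dichotomy** (Nedela–Škoviera).  Let `M` be a 5-pole (a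
cubic multipole whose five semiedge ends are enumerated by `s`) whose
colouring set is contained in `Col(C₅)`.  Then either `Col(M) = ∅` or
`Col(M) = Col(C₅)`; in particular, every colourable superpentagon is
perfect. -/
theorem superpentagon_dichotomy (M : Multipole) (hM : M.IsCubic)
    (s : Fin 5 → M.E × Bool)
    (hs1 : ∀ j, M.endAt (s j).1 (s j).2 = none)
    (hs2 : Function.Injective s)
    (hs3 : ∀ p : M.E × Bool, M.endAt p.1 p.2 = none → ∃ j, s j = p)
    (hsub : ∀ t : Fin 5 → Klein,
      (∃ φ : M.E → Klein, M.Proper φ ∧ ∀ j, φ (s j).1 = t j) → C5col t) :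
    (∀ t : Fin 5 → Klein, ¬ ∃ φ : M.E → Klein, M.Proper φ ∧ ∀ j, φ (s j).1 = t j) ∨
    (∀ t : Fin 5 → Klein,
      (∃ φ : M.E → Klein, M.Proper φ ∧ ∀ j, φ (s j).1 = t j) ↔ C5col t) := by
  by_cases hne : ∀ t : Fin 5 → Klein, ¬ ∃ φ : M.E → Klein, M.Proper φ ∧ ∀ j, φ (s j).1 = t j
  · exact Or.inl hne
  right
  push_neg at hne
  obtain ⟨t₀, ht₀⟩ := hne
  set S : (Fin 5 → Klein) → Prop := fun t => ∃ φ : M.E → Klein, M.Proper φ ∧ ∀ j, φ (s j).1 = t j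
    with hSdef
  have hstep : ∀ t : Fin 5 → Klein, S t → ∀ x y : Klein, x ≠ 0 → y ≠ 0 → x ≠ y →
      ∀ i : Fin 5, (t i = x ∨ t i = y) → ∀ t' : Fin 5 → Klein,
      (∀ j : Fin 5, j ≠ i → (t j = x ∨ t j = y) →
        Col30 (fun k => if k = i ∨ k = j then t k + x + y else t k) →
        (fun k => if k = i ∨ k = j then t k + x + y else t k) = t') →
      S t' := by
    rintro t ⟨φ, hφ, hφs⟩ x y hx hy hxy i hi t' huniq
    obtain ⟨j, φ', hji, hcolj, hproper, hvals⟩ :=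
      kempe M hM φ hφ s hs1 hs2 hs3 x y hx hy hxy i (by rw [hφs i]; exact hi)
    have hS' : S (fun k => if k = i ∨ k = j then t k + x + y else t k) := by
      refine ⟨φ', hproper, fun k => ?_⟩
      rw [hvals k, hφs k]
    have heq := huniq j hji (by rw [← hφs j]; exact hcolj) (enum30 _ (hsub _ hS'))
    rw [← heq]
    exact hS'
  have hc₀ := enum30 t₀ (hsub t₀ ht₀)
  have hall : ∀ u : Fin 5 → Klein, C5col u → S u := by
    have hhub : S (![(0,1), (0,1), (0,1), (1,0), (1,1)] : Fin 5 → Klein) := by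
      rcases hc₀ with h|h|h|h|h|h|h|h|h|h|h|h|h|h|h|h|h|h|h|h|h|h|h|h|h|h|h|h|h|h
      · rw [h] at ht₀
        have h0 : S (![(0,1), (0,1), (0,1), (1,0), (1,1)] : Fin 5 → Klein) := ht₀
        exact h0
      · rw [h] at ht₀
        have h0 : S (![(0,1), (0,1), (0,1), (1,1), (1,0)] : Fin 5 → Klein) := ht₀
        have h1 : S (![(0,1), (0,1), (0,1), (1,0), (1,1)] : Fin 5 → Klein) := hstep (![(0,1), (0,1), (0,1), (1,1), (1,0)] : Fin 5 → Klein) h0 (1,0) (1,1) (by decide) (by decide) (by decide) 3 (by decide) (![(0,1), (0,1), (0,1), (1,0), (1,1)] : Fin 5 → Klein) (by decide)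
        exact h1
      · rw [h] at ht₀
        have h0 : S (![(0,1), (0,1), (1,0), (1,1), (0,1)] : Fin 5 → Klein) := ht₀
        have h1 : S (![(0,1), (0,1), (0,1), (1,1), (1,0)] : Fin 5 → Klein) := hstep (![(0,1), (0,1), (1,0), (1,1), (0,1)] : Fin 5 → Klein) h0 (0,1) (1,0) (by decide) (by decide) (by decide) 2 (by decide) (![(0,1), (0,1), (0,1), (1,1), (1,0)] : Fin 5 → Klein) (by decide)
        have h2 : S (![(0,1), (0,1), (0,1), (1,0), (1,1)] : Fin 5 → Klein) := hstep (![(0,1), (0,1), (0,1), (1,1), (1,0)] : Fin 5 → Klein) h1 (1,0) (1,1) (by decide) (by decide) (by decide) 3 (by decide) (![(0,1), (0,1), (0,1), (1,0), (1,1)] : Fin 5 → Klein) (by decide)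
        exact h2
      · rw [h] at ht₀
        have h0 : S (![(0,1), (0,1), (1,1), (1,0), (0,1)] : Fin 5 → Klein) := ht₀
        have h1 : S (![(0,1), (0,1), (0,1), (1,0), (1,1)] : Fin 5 → Klein) := hstep (![(0,1), (0,1), (1,1), (1,0), (0,1)] : Fin 5 → Klein) h0 (0,1) (1,1) (by decide) (by decide) (by decide) 2 (by decide) (![(0,1), (0,1), (0,1), (1,0), (1,1)] : Fin 5 → Klein) (by decide)
        exact h1
      · rw [h] at ht₀
        have h0 : S (![(0,1), (1,0), (1,0), (1,0), (1,1)] : Fin 5 → Klein) := ht₀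
        have h1 : S (![(0,1), (0,1), (0,1), (1,0), (1,1)] : Fin 5 → Klein) := hstep (![(0,1), (1,0), (1,0), (1,0), (1,1)] : Fin 5 → Klein) h0 (0,1) (1,0) (by decide) (by decide) (by decide) 1 (by decide) (![(0,1), (0,1), (0,1), (1,0), (1,1)] : Fin 5 → Klein) (by decide)
        exact h1
      · rw [h] at ht₀
        have h0 : S (![(0,1), (1,0), (1,1), (0,1), (0,1)] : Fin 5 → Klein) := ht₀
        have h1 : S (![(0,1), (0,1), (1,1), (1,0), (0,1)] : Fin 5 → Klein) := hstep (![(0,1), (1,0), (1,1), (0,1), (0,1)] : Fin 5 → Klein) h0 (0,1) (1,0) (by decide) (by decide) (by decide) 1 (by decide) (![(0,1), (0,1), (1,1), (1,0), (0,1)] : Fin 5 → Klein) (by decide)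
        have h2 : S (![(0,1), (0,1), (0,1), (1,0), (1,1)] : Fin 5 → Klein) := hstep (![(0,1), (0,1), (1,1), (1,0), (0,1)] : Fin 5 → Klein) h1 (0,1) (1,1) (by decide) (by decide) (by decide) 2 (by decide) (![(0,1), (0,1), (0,1), (1,0), (1,1)] : Fin 5 → Klein) (by decide)
        exact h2
      · rw [h] at ht₀
        have h0 : S (![(0,1), (1,0), (1,1), (1,1), (1,1)] : Fin 5 → Klein) := ht₀
        have h1 : S (![(0,1), (1,0), (1,0), (1,0), (1,1)] : Fin 5 → Klein) := hstep (![(0,1), (1,0), (1,1), (1,1), (1,1)] : Fin 5 → Klein) h0 (1,0) (1,1) (by decide) (by decide) (by decide) 2 (by decide) (![(0,1), (1,0), (1,0), (1,0), (1,1)] : Fin 5 → Klein) (by decide)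
        have h2 : S (![(0,1), (0,1), (0,1), (1,0), (1,1)] : Fin 5 → Klein) := hstep (![(0,1), (1,0), (1,0), (1,0), (1,1)] : Fin 5 → Klein) h1 (0,1) (1,0) (by decide) (by decide) (by decide) 1 (by decide) (![(0,1), (0,1), (0,1), (1,0), (1,1)] : Fin 5 → Klein) (by decide)
        exact h2
      · rw [h] at ht₀
        have h0 : S (![(0,1), (1,1), (1,0), (0,1), (0,1)] : Fin 5 → Klein) := ht₀
        have h1 : S (![(1,0), (1,1), (0,1), (0,1), (0,1)] : Fin 5 → Klein) := hstep (![(0,1), (1,1), (1,0), (0,1), (0,1)] : Fin 5 → Klein) h0 (0,1) (1,0) (by decide) (by decide) (by decide) 0 (by decide) (![(1,0), (1,1), (0,1), (0,1), (0,1)] : Fin 5 → Klein) (by decide)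
        have h2 : S (![(1,0), (0,1), (0,1), (0,1), (1,1)] : Fin 5 → Klein) := hstep (![(1,0), (1,1), (0,1), (0,1), (0,1)] : Fin 5 → Klein) h1 (0,1) (1,1) (by decide) (by decide) (by decide) 1 (by decide) (![(1,0), (0,1), (0,1), (0,1), (1,1)] : Fin 5 → Klein) (by decide)
        have h3 : S (![(0,1), (0,1), (0,1), (1,0), (1,1)] : Fin 5 → Klein) := hstep (![(1,0), (0,1), (0,1), (0,1), (1,1)] : Fin 5 → Klein) h2 (0,1) (1,0) (by decide) (by decide) (by decide) 0 (by decide) (![(0,1), (0,1), (0,1), (1,0), (1,1)] : Fin 5 → Klein) (by decide)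
        exact h3
      · rw [h] at ht₀
        have h0 : S (![(0,1), (1,1), (1,0), (1,0), (1,0)] : Fin 5 → Klein) := ht₀
        have h1 : S (![(0,1), (1,0), (1,0), (1,0), (1,1)] : Fin 5 → Klein) := hstep (![(0,1), (1,1), (1,0), (1,0), (1,0)] : Fin 5 → Klein) h0 (1,0) (1,1) (by decide) (by decide) (by decide) 1 (by decide) (![(0,1), (1,0), (1,0), (1,0), (1,1)] : Fin 5 → Klein) (by decide)
        have h2 : S (![(0,1), (0,1), (0,1), (1,0), (1,1)] : Fin 5 → Klein) := hstep (![(0,1), (1,0), (1,0), (1,0), (1,1)] : Fin 5 → Klein) h1 (0,1) (1,0) (by decide) (by decide) (by decide) 1 (by decide) (![(0,1), (0,1), (0,1), (1,0), (1,1)] : Fin 5 → Klein) (by decide)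
        exact h2
      · rw [h] at ht₀
        have h0 : S (![(0,1), (1,1), (1,1), (1,1), (1,0)] : Fin 5 → Klein) := ht₀
        have h1 : S (![(0,1), (0,1), (0,1), (1,1), (1,0)] : Fin 5 → Klein) := hstep (![(0,1), (1,1), (1,1), (1,1), (1,0)] : Fin 5 → Klein) h0 (0,1) (1,1) (by decide) (by decide) (by decide) 1 (by decide) (![(0,1), (0,1), (0,1), (1,1), (1,0)] : Fin 5 → Klein) (by decide)
        have h2 : S (![(0,1), (0,1), (0,1), (1,0), (1,1)] : Fin 5 → Klein) := hstep (![(0,1), (0,1), (0,1), (1,1), (1,0)] : Fin 5 → Klein) h1 (1,0) (1,1) (by decide) (by decide) (by decide) 3 (by decide) (![(0,1), (0,1), (0,1), (1,0), (1,1)] : Fin 5 → Klein) (by decide)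
        exact h2
      · rw [h] at ht₀
        have h0 : S (![(1,0), (0,1), (0,1), (0,1), (1,1)] : Fin 5 → Klein) := ht₀
        have h1 : S (![(0,1), (0,1), (0,1), (1,0), (1,1)] : Fin 5 → Klein) := hstep (![(1,0), (0,1), (0,1), (0,1), (1,1)] : Fin 5 → Klein) h0 (0,1) (1,0) (by decide) (by decide) (by decide) 0 (by decide) (![(0,1), (0,1), (0,1), (1,0), (1,1)] : Fin 5 → Klein) (by decide)
        exact h1
      · rw [h] at ht₀
        have h0 : S (![(1,0), (0,1), (1,1), (1,0), (1,0)] : Fin 5 → Klein) := ht₀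
        have h1 : S (![(0,1), (0,1), (1,1), (1,0), (0,1)] : Fin 5 → Klein) := hstep (![(1,0), (0,1), (1,1), (1,0), (1,0)] : Fin 5 → Klein) h0 (0,1) (1,0) (by decide) (by decide) (by decide) 0 (by decide) (![(0,1), (0,1), (1,1), (1,0), (0,1)] : Fin 5 → Klein) (by decide)
        have h2 : S (![(0,1), (0,1), (0,1), (1,0), (1,1)] : Fin 5 → Klein) := hstep (![(0,1), (0,1), (1,1), (1,0), (0,1)] : Fin 5 → Klein) h1 (0,1) (1,1) (by decide) (by decide) (by decide) 2 (by decide) (![(0,1), (0,1), (0,1), (1,0), (1,1)] : Fin 5 → Klein) (by decide)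
        exact h2
      · rw [h] at ht₀
        have h0 : S (![(1,0), (0,1), (1,1), (1,1), (1,1)] : Fin 5 → Klein) := ht₀
        have h1 : S (![(1,0), (0,1), (0,1), (0,1), (1,1)] : Fin 5 → Klein) := hstep (![(1,0), (0,1), (1,1), (1,1), (1,1)] : Fin 5 → Klein) h0 (0,1) (1,1) (by decide) (by decide) (by decide) 2 (by decide) (![(1,0), (0,1), (0,1), (0,1), (1,1)] : Fin 5 → Klein) (by decide)
        have h2 : S (![(0,1), (0,1), (0,1), (1,0), (1,1)] : Fin 5 → Klein) := hstep (![(1,0), (0,1), (0,1), (0,1), (1,1)] : Fin 5 → Klein) h1 (0,1) (1,0) (by decide) (by decide) (by decide) 0 (by decide) (![(0,1), (0,1), (0,1), (1,0), (1,1)] : Fin 5 → Klein) (by decide)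
        exact h2
      · rw [h] at ht₀
        have h0 : S (![(1,0), (1,0), (0,1), (1,1), (1,0)] : Fin 5 → Klein) := ht₀
        have h1 : S (![(0,1), (0,1), (0,1), (1,1), (1,0)] : Fin 5 → Klein) := hstep (![(1,0), (1,0), (0,1), (1,1), (1,0)] : Fin 5 → Klein) h0 (0,1) (1,0) (by decide) (by decide) (by decide) 0 (by decide) (![(0,1), (0,1), (0,1), (1,1), (1,0)] : Fin 5 → Klein) (by decide)
        have h2 : S (![(0,1), (0,1), (0,1), (1,0), (1,1)] : Fin 5 → Klein) := hstep (![(0,1), (0,1), (0,1), (1,1), (1,0)] : Fin 5 → Klein) h1 (1,0) (1,1) (by decide) (by decide) (by decide) 3 (by decide) (![(0,1), (0,1), (0,1), (1,0), (1,1)] : Fin 5 → Klein) (by decide)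
        exact h2
      · rw [h] at ht₀
        have h0 : S (![(1,0), (1,0), (1,0), (0,1), (1,1)] : Fin 5 → Klein) := ht₀
        have h1 : S (![(0,1), (1,0), (1,0), (1,0), (1,1)] : Fin 5 → Klein) := hstep (![(1,0), (1,0), (1,0), (0,1), (1,1)] : Fin 5 → Klein) h0 (0,1) (1,0) (by decide) (by decide) (by decide) 0 (by decide) (![(0,1), (1,0), (1,0), (1,0), (1,1)] : Fin 5 → Klein) (by decide)
        have h2 : S (![(0,1), (0,1), (0,1), (1,0), (1,1)] : Fin 5 → Klein) := hstep (![(0,1), (1,0), (1,0), (1,0), (1,1)] : Fin 5 → Klein) h1 (0,1) (1,0) (by decide) (by decide) (by decide) 1 (by decide) (![(0,1), (0,1), (0,1), (1,0), (1,1)] : Fin 5 → Klein) (by decide)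
        exact h2
      · rw [h] at ht₀
        have h0 : S (![(1,0), (1,0), (1,0), (1,1), (0,1)] : Fin 5 → Klein) := ht₀
        have h1 : S (![(0,1), (0,1), (1,0), (1,1), (0,1)] : Fin 5 → Klein) := hstep (![(1,0), (1,0), (1,0), (1,1), (0,1)] : Fin 5 → Klein) h0 (0,1) (1,0) (by decide) (by decide) (by decide) 0 (by decide) (![(0,1), (0,1), (1,0), (1,1), (0,1)] : Fin 5 → Klein) (by decide)
        have h2 : S (![(0,1), (0,1), (0,1), (1,1), (1,0)] : Fin 5 → Klein) := hstep (![(0,1), (0,1), (1,0), (1,1), (0,1)] : Fin 5 → Klein) h1 (0,1) (1,0) (by decide) (by decide) (by decide) 2 (by decide) (![(0,1), (0,1), (0,1), (1,1), (1,0)] : Fin 5 → Klein) (by decide)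
        have h3 : S (![(0,1), (0,1), (0,1), (1,0), (1,1)] : Fin 5 → Klein) := hstep (![(0,1), (0,1), (0,1), (1,1), (1,0)] : Fin 5 → Klein) h2 (1,0) (1,1) (by decide) (by decide) (by decide) 3 (by decide) (![(0,1), (0,1), (0,1), (1,0), (1,1)] : Fin 5 → Klein) (by decide)
        exact h3
      · rw [h] at ht₀
        have h0 : S (![(1,0), (1,0), (1,1), (0,1), (1,0)] : Fin 5 → Klein) := ht₀
        have h1 : S (![(0,1), (1,0), (1,1), (0,1), (0,1)] : Fin 5 → Klein) := hstep (![(1,0), (1,0), (1,1), (0,1), (1,0)] : Fin 5 → Klein) h0 (0,1) (1,0) (by decide) (by decide) (by decide) 0 (by decide) (![(0,1), (1,0), (1,1), (0,1), (0,1)] : Fin 5 → Klein) (by decide)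
        have h2 : S (![(0,1), (0,1), (1,1), (1,0), (0,1)] : Fin 5 → Klein) := hstep (![(0,1), (1,0), (1,1), (0,1), (0,1)] : Fin 5 → Klein) h1 (0,1) (1,0) (by decide) (by decide) (by decide) 1 (by decide) (![(0,1), (0,1), (1,1), (1,0), (0,1)] : Fin 5 → Klein) (by decide)
        have h3 : S (![(0,1), (0,1), (0,1), (1,0), (1,1)] : Fin 5 → Klein) := hstep (![(0,1), (0,1), (1,1), (1,0), (0,1)] : Fin 5 → Klein) h2 (0,1) (1,1) (by decide) (by decide) (by decide) 2 (by decide) (![(0,1), (0,1), (0,1), (1,0), (1,1)] : Fin 5 → Klein) (by decide)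
        exact h3
      · rw [h] at ht₀
        have h0 : S (![(1,0), (1,1), (0,1), (0,1), (0,1)] : Fin 5 → Klein) := ht₀
        have h1 : S (![(1,0), (0,1), (0,1), (0,1), (1,1)] : Fin 5 → Klein) := hstep (![(1,0), (1,1), (0,1), (0,1), (0,1)] : Fin 5 → Klein) h0 (0,1) (1,1) (by decide) (by decide) (by decide) 1 (by decide) (![(1,0), (0,1), (0,1), (0,1), (1,1)] : Fin 5 → Klein) (by decide)
        have h2 : S (![(0,1), (0,1), (0,1), (1,0), (1,1)] : Fin 5 → Klein) := hstep (![(1,0), (0,1), (0,1), (0,1), (1,1)] : Fin 5 → Klein) h1 (0,1) (1,0) (by decide) (by decide) (by decide) 0 (by decide) (![(0,1), (0,1), (0,1), (1,0), (1,1)] : Fin 5 → Klein) (by decide)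
        exact h2
      · rw [h] at ht₀
        have h0 : S (![(1,0), (1,1), (0,1), (1,0), (1,0)] : Fin 5 → Klein) := ht₀
        have h1 : S (![(1,1), (1,1), (0,1), (1,0), (1,1)] : Fin 5 → Klein) := hstep (![(1,0), (1,1), (0,1), (1,0), (1,0)] : Fin 5 → Klein) h0 (1,0) (1,1) (by decide) (by decide) (by decide) 0 (by decide) (![(1,1), (1,1), (0,1), (1,0), (1,1)] : Fin 5 → Klein) (by decide)
        have h2 : S (![(0,1), (0,1), (0,1), (1,0), (1,1)] : Fin 5 → Klein) := hstep (![(1,1), (1,1), (0,1), (1,0), (1,1)] : Fin 5 → Klein) h1 (0,1) (1,1) (by decide) (by decide) (by decide) 0 (by decide) (![(0,1), (0,1), (0,1), (1,0), (1,1)] : Fin 5 → Klein) (by decide)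
        exact h2
      · rw [h] at ht₀
        have h0 : S (![(1,0), (1,1), (1,1), (1,1), (0,1)] : Fin 5 → Klein) := ht₀
        have h1 : S (![(0,1), (1,1), (1,1), (1,1), (1,0)] : Fin 5 → Klein) := hstep (![(1,0), (1,1), (1,1), (1,1), (0,1)] : Fin 5 → Klein) h0 (0,1) (1,0) (by decide) (by decide) (by decide) 0 (by decide) (![(0,1), (1,1), (1,1), (1,1), (1,0)] : Fin 5 → Klein) (by decide)
        have h2 : S (![(0,1), (0,1), (0,1), (1,1), (1,0)] : Fin 5 → Klein) := hstep (![(0,1), (1,1), (1,1), (1,1), (1,0)] : Fin 5 → Klein) h1 (0,1) (1,1) (by decide) (by decide) (by decide) 1 (by decide) (![(0,1), (0,1), (0,1), (1,1), (1,0)] : Fin 5 → Klein) (by decide)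
        have h3 : S (![(0,1), (0,1), (0,1), (1,0), (1,1)] : Fin 5 → Klein) := hstep (![(0,1), (0,1), (0,1), (1,1), (1,0)] : Fin 5 → Klein) h2 (1,0) (1,1) (by decide) (by decide) (by decide) 3 (by decide) (![(0,1), (0,1), (0,1), (1,0), (1,1)] : Fin 5 → Klein) (by decide)
        exact h3
      · rw [h] at ht₀
        have h0 : S (![(1,1), (0,1), (0,1), (0,1), (1,0)] : Fin 5 → Klein) := ht₀
        have h1 : S (![(0,1), (0,1), (0,1), (1,1), (1,0)] : Fin 5 → Klein) := hstep (![(1,1), (0,1), (0,1), (0,1), (1,0)] : Fin 5 → Klein) h0 (0,1) (1,1) (by decide) (by decide) (by decide) 0 (by decide) (![(0,1), (0,1), (0,1), (1,1), (1,0)] : Fin 5 → Klein) (by decide)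
        have h2 : S (![(0,1), (0,1), (0,1), (1,0), (1,1)] : Fin 5 → Klein) := hstep (![(0,1), (0,1), (0,1), (1,1), (1,0)] : Fin 5 → Klein) h1 (1,0) (1,1) (by decide) (by decide) (by decide) 3 (by decide) (![(0,1), (0,1), (0,1), (1,0), (1,1)] : Fin 5 → Klein) (by decide)
        exact h2
      · rw [h] at ht₀
        have h0 : S (![(1,1), (0,1), (1,0), (1,0), (1,0)] : Fin 5 → Klein) := ht₀
        have h1 : S (![(1,1), (1,0), (1,0), (1,0), (0,1)] : Fin 5 → Klein) := hstep (![(1,1), (0,1), (1,0), (1,0), (1,0)] : Fin 5 → Klein) h0 (0,1) (1,0) (by decide) (by decide) (by decide) 1 (by decide) (![(1,1), (1,0), (1,0), (1,0), (0,1)] : Fin 5 → Klein) (by decide)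
        have h2 : S (![(0,1), (1,0), (1,0), (1,0), (1,1)] : Fin 5 → Klein) := hstep (![(1,1), (1,0), (1,0), (1,0), (0,1)] : Fin 5 → Klein) h1 (0,1) (1,1) (by decide) (by decide) (by decide) 0 (by decide) (![(0,1), (1,0), (1,0), (1,0), (1,1)] : Fin 5 → Klein) (by decide)
        have h3 : S (![(0,1), (0,1), (0,1), (1,0), (1,1)] : Fin 5 → Klein) := hstep (![(0,1), (1,0), (1,0), (1,0), (1,1)] : Fin 5 → Klein) h2 (0,1) (1,0) (by decide) (by decide) (by decide) 1 (by decide) (![(0,1), (0,1), (0,1), (1,0), (1,1)] : Fin 5 → Klein) (by decide)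
        exact h3
      · rw [h] at ht₀
        have h0 : S (![(1,1), (0,1), (1,0), (1,1), (1,1)] : Fin 5 → Klein) := ht₀
        have h1 : S (![(1,1), (1,0), (0,1), (1,1), (1,1)] : Fin 5 → Klein) := hstep (![(1,1), (0,1), (1,0), (1,1), (1,1)] : Fin 5 → Klein) h0 (0,1) (1,0) (by decide) (by decide) (by decide) 1 (by decide) (![(1,1), (1,0), (0,1), (1,1), (1,1)] : Fin 5 → Klein) (by decide)
        have h2 : S (![(1,1), (1,1), (0,1), (1,0), (1,1)] : Fin 5 → Klein) := hstep (![(1,1), (1,0), (0,1), (1,1), (1,1)] : Fin 5 → Klein) h1 (1,0) (1,1) (by decide) (by decide) (by decide) 1 (by decide) (![(1,1), (1,1), (0,1), (1,0), (1,1)] : Fin 5 → Klein) (by decide)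
        have h3 : S (![(0,1), (0,1), (0,1), (1,0), (1,1)] : Fin 5 → Klein) := hstep (![(1,1), (1,1), (0,1), (1,0), (1,1)] : Fin 5 → Klein) h2 (0,1) (1,1) (by decide) (by decide) (by decide) 0 (by decide) (![(0,1), (0,1), (0,1), (1,0), (1,1)] : Fin 5 → Klein) (by decide)
        exact h3
      · rw [h] at ht₀
        have h0 : S (![(1,1), (1,0), (0,1), (0,1), (0,1)] : Fin 5 → Klein) := ht₀
        have h1 : S (![(1,1), (0,1), (0,1), (0,1), (1,0)] : Fin 5 → Klein) := hstep (![(1,1), (1,0), (0,1), (0,1), (0,1)] : Fin 5 → Klein) h0 (0,1) (1,0) (by decide) (by decide) (by decide) 1 (by decide) (![(1,1), (0,1), (0,1), (0,1), (1,0)] : Fin 5 → Klein) (by decide)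
        have h2 : S (![(0,1), (0,1), (0,1), (1,1), (1,0)] : Fin 5 → Klein) := hstep (![(1,1), (0,1), (0,1), (0,1), (1,0)] : Fin 5 → Klein) h1 (0,1) (1,1) (by decide) (by decide) (by decide) 0 (by decide) (![(0,1), (0,1), (0,1), (1,1), (1,0)] : Fin 5 → Klein) (by decide)
        have h3 : S (![(0,1), (0,1), (0,1), (1,0), (1,1)] : Fin 5 → Klein) := hstep (![(0,1), (0,1), (0,1), (1,1), (1,0)] : Fin 5 → Klein) h2 (1,0) (1,1) (by decide) (by decide) (by decide) 3 (by decide) (![(0,1), (0,1), (0,1), (1,0), (1,1)] : Fin 5 → Klein) (by decide)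
        exact h3
      · rw [h] at ht₀
        have h0 : S (![(1,1), (1,0), (0,1), (1,1), (1,1)] : Fin 5 → Klein) := ht₀
        have h1 : S (![(1,1), (1,1), (0,1), (1,0), (1,1)] : Fin 5 → Klein) := hstep (![(1,1), (1,0), (0,1), (1,1), (1,1)] : Fin 5 → Klein) h0 (1,0) (1,1) (by decide) (by decide) (by decide) 1 (by decide) (![(1,1), (1,1), (0,1), (1,0), (1,1)] : Fin 5 → Klein) (by decide)
        have h2 : S (![(0,1), (0,1), (0,1), (1,0), (1,1)] : Fin 5 → Klein) := hstep (![(1,1), (1,1), (0,1), (1,0), (1,1)] : Fin 5 → Klein) h1 (0,1) (1,1) (by decide) (by decide) (by decide) 0 (by decide) (![(0,1), (0,1), (0,1), (1,0), (1,1)] : Fin 5 → Klein) (by decide)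
        exact h2
      · rw [h] at ht₀
        have h0 : S (![(1,1), (1,0), (1,0), (1,0), (0,1)] : Fin 5 → Klein) := ht₀
        have h1 : S (![(0,1), (1,0), (1,0), (1,0), (1,1)] : Fin 5 → Klein) := hstep (![(1,1), (1,0), (1,0), (1,0), (0,1)] : Fin 5 → Klein) h0 (0,1) (1,1) (by decide) (by decide) (by decide) 0 (by decide) (![(0,1), (1,0), (1,0), (1,0), (1,1)] : Fin 5 → Klein) (by decide)
        have h2 : S (![(0,1), (0,1), (0,1), (1,0), (1,1)] : Fin 5 → Klein) := hstep (![(0,1), (1,0), (1,0), (1,0), (1,1)] : Fin 5 → Klein) h1 (0,1) (1,0) (by decide) (by decide) (by decide) 1 (by decide) (![(0,1), (0,1), (0,1), (1,0), (1,1)] : Fin 5 → Klein) (by decide)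
        exact h2
      · rw [h] at ht₀
        have h0 : S (![(1,1), (1,1), (0,1), (1,0), (1,1)] : Fin 5 → Klein) := ht₀
        have h1 : S (![(0,1), (0,1), (0,1), (1,0), (1,1)] : Fin 5 → Klein) := hstep (![(1,1), (1,1), (0,1), (1,0), (1,1)] : Fin 5 → Klein) h0 (0,1) (1,1) (by decide) (by decide) (by decide) 0 (by decide) (![(0,1), (0,1), (0,1), (1,0), (1,1)] : Fin 5 → Klein) (by decide)
        exact h1
      · rw [h] at ht₀
        have h0 : S (![(1,1), (1,1), (1,0), (0,1), (1,1)] : Fin 5 → Klein) := ht₀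
        have h1 : S (![(1,1), (1,1), (0,1), (1,0), (1,1)] : Fin 5 → Klein) := hstep (![(1,1), (1,1), (1,0), (0,1), (1,1)] : Fin 5 → Klein) h0 (0,1) (1,0) (by decide) (by decide) (by decide) 2 (by decide) (![(1,1), (1,1), (0,1), (1,0), (1,1)] : Fin 5 → Klein) (by decide)
        have h2 : S (![(0,1), (0,1), (0,1), (1,0), (1,1)] : Fin 5 → Klein) := hstep (![(1,1), (1,1), (0,1), (1,0), (1,1)] : Fin 5 → Klein) h1 (0,1) (1,1) (by decide) (by decide) (by decide) 0 (by decide) (![(0,1), (0,1), (0,1), (1,0), (1,1)] : Fin 5 → Klein) (by decide)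
        exact h2
      · rw [h] at ht₀
        have h0 : S (![(1,1), (1,1), (1,1), (0,1), (1,0)] : Fin 5 → Klein) := ht₀
        have h1 : S (![(1,1), (1,1), (1,1), (1,0), (0,1)] : Fin 5 → Klein) := hstep (![(1,1), (1,1), (1,1), (0,1), (1,0)] : Fin 5 → Klein) h0 (0,1) (1,0) (by decide) (by decide) (by decide) 3 (by decide) (![(1,1), (1,1), (1,1), (1,0), (0,1)] : Fin 5 → Klein) (by decide)
        have h2 : S (![(0,1), (0,1), (1,1), (1,0), (0,1)] : Fin 5 → Klein) := hstep (![(1,1), (1,1), (1,1), (1,0), (0,1)] : Fin 5 → Klein) h1 (0,1) (1,1) (by decide) (by decide) (by decide) 0 (by decide) (![(0,1), (0,1), (1,1), (1,0), (0,1)] : Fin 5 → Klein) (by decide)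
        have h3 : S (![(0,1), (0,1), (0,1), (1,0), (1,1)] : Fin 5 → Klein) := hstep (![(0,1), (0,1), (1,1), (1,0), (0,1)] : Fin 5 → Klein) h2 (0,1) (1,1) (by decide) (by decide) (by decide) 2 (by decide) (![(0,1), (0,1), (0,1), (1,0), (1,1)] : Fin 5 → Klein) (by decide)
        exact h3
      · rw [h] at ht₀
        have h0 : S (![(1,1), (1,1), (1,1), (1,0), (0,1)] : Fin 5 → Klein) := ht₀
        have h1 : S (![(0,1), (0,1), (1,1), (1,0), (0,1)] : Fin 5 → Klein) := hstep (![(1,1), (1,1), (1,1), (1,0), (0,1)] : Fin 5 → Klein) h0 (0,1) (1,1) (by decide) (by decide) (by decide) 0 (by decide) (![(0,1), (0,1), (1,1), (1,0), (0,1)] : Fin 5 → Klein) (by decide)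
        have h2 : S (![(0,1), (0,1), (0,1), (1,0), (1,1)] : Fin 5 → Klein) := hstep (![(0,1), (0,1), (1,1), (1,0), (0,1)] : Fin 5 → Klein) h1 (0,1) (1,1) (by decide) (by decide) (by decide) 2 (by decide) (![(0,1), (0,1), (0,1), (1,0), (1,1)] : Fin 5 → Klein) (by decide)
        exact h2
    intro u hu
    rcases enum30 u hu with h|h|h|h|h|h|h|h|h|h|h|h|h|h|h|h|h|h|h|h|h|h|h|h|h|h|h|h|h|h
    · rw [h]
      exact hhub
    · rw [h]
      have g1 : S (![(0,1), (0,1), (0,1), (1,1), (1,0)] : Fin 5 → Klein) := hstep (![(0,1), (0,1), (0,1), (1,0), (1,1)] : Fin 5 → Klein) hhub (1,0) (1,1) (by decide) (by decide) (by decide) 3 (by decide) (![(0,1), (0,1), (0,1), (1,1), (1,0)] : Fin 5 → Klein) (by decide)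
      exact g1
    · rw [h]
      have g1 : S (![(0,1), (0,1), (1,1), (1,0), (0,1)] : Fin 5 → Klein) := hstep (![(0,1), (0,1), (0,1), (1,0), (1,1)] : Fin 5 → Klein) hhub (0,1) (1,1) (by decide) (by decide) (by decide) 2 (by decide) (![(0,1), (0,1), (1,1), (1,0), (0,1)] : Fin 5 → Klein) (by decide)
      have g2 : S (![(0,1), (0,1), (1,0), (1,1), (0,1)] : Fin 5 → Klein) := hstep (![(0,1), (0,1), (1,1), (1,0), (0,1)] : Fin 5 → Klein) g1 (1,0) (1,1) (by decide) (by decide) (by decide) 2 (by decide) (![(0,1), (0,1), (1,0), (1,1), (0,1)] : Fin 5 → Klein) (by decide)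
      exact g2
    · rw [h]
      have g1 : S (![(0,1), (0,1), (1,1), (1,0), (0,1)] : Fin 5 → Klein) := hstep (![(0,1), (0,1), (0,1), (1,0), (1,1)] : Fin 5 → Klein) hhub (0,1) (1,1) (by decide) (by decide) (by decide) 2 (by decide) (![(0,1), (0,1), (1,1), (1,0), (0,1)] : Fin 5 → Klein) (by decide)
      exact g1
    · rw [h]
      have g1 : S (![(0,1), (1,0), (1,0), (1,0), (1,1)] : Fin 5 → Klein) := hstep (![(0,1), (0,1), (0,1), (1,0), (1,1)] : Fin 5 → Klein) hhub (0,1) (1,0) (by decide) (by decide) (by decide) 1 (by decide) (![(0,1), (1,0), (1,0), (1,0), (1,1)] : Fin 5 → Klein) (by decide)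
      exact g1
    · rw [h]
      have g1 : S (![(0,1), (0,1), (1,1), (1,0), (0,1)] : Fin 5 → Klein) := hstep (![(0,1), (0,1), (0,1), (1,0), (1,1)] : Fin 5 → Klein) hhub (0,1) (1,1) (by decide) (by decide) (by decide) 2 (by decide) (![(0,1), (0,1), (1,1), (1,0), (0,1)] : Fin 5 → Klein) (by decide)
      have g2 : S (![(0,1), (1,0), (1,1), (0,1), (0,1)] : Fin 5 → Klein) := hstep (![(0,1), (0,1), (1,1), (1,0), (0,1)] : Fin 5 → Klein) g1 (0,1) (1,0) (by decide) (by decide) (by decide) 1 (by decide) (![(0,1), (1,0), (1,1), (0,1), (0,1)] : Fin 5 → Klein) (by decide)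
      exact g2
    · rw [h]
      have g1 : S (![(0,1), (1,0), (1,0), (1,0), (1,1)] : Fin 5 → Klein) := hstep (![(0,1), (0,1), (0,1), (1,0), (1,1)] : Fin 5 → Klein) hhub (0,1) (1,0) (by decide) (by decide) (by decide) 1 (by decide) (![(0,1), (1,0), (1,0), (1,0), (1,1)] : Fin 5 → Klein) (by decide)
      have g2 : S (![(0,1), (1,0), (1,1), (1,1), (1,1)] : Fin 5 → Klein) := hstep (![(0,1), (1,0), (1,0), (1,0), (1,1)] : Fin 5 → Klein) g1 (1,0) (1,1) (by decide) (by decide) (by decide) 2 (by decide) (![(0,1), (1,0), (1,1), (1,1), (1,1)] : Fin 5 → Klein) (by decide)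
      exact g2
    · rw [h]
      have g1 : S (![(1,0), (0,1), (0,1), (0,1), (1,1)] : Fin 5 → Klein) := hstep (![(0,1), (0,1), (0,1), (1,0), (1,1)] : Fin 5 → Klein) hhub (0,1) (1,0) (by decide) (by decide) (by decide) 0 (by decide) (![(1,0), (0,1), (0,1), (0,1), (1,1)] : Fin 5 → Klein) (by decide)
      have g2 : S (![(1,0), (1,1), (0,1), (0,1), (0,1)] : Fin 5 → Klein) := hstep (![(1,0), (0,1), (0,1), (0,1), (1,1)] : Fin 5 → Klein) g1 (0,1) (1,1) (by decide) (by decide) (by decide) 1 (by decide) (![(1,0), (1,1), (0,1), (0,1), (0,1)] : Fin 5 → Klein) (by decide)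
      have g3 : S (![(0,1), (1,1), (1,0), (0,1), (0,1)] : Fin 5 → Klein) := hstep (![(1,0), (1,1), (0,1), (0,1), (0,1)] : Fin 5 → Klein) g2 (0,1) (1,0) (by decide) (by decide) (by decide) 0 (by decide) (![(0,1), (1,1), (1,0), (0,1), (0,1)] : Fin 5 → Klein) (by decide)
      exact g3
    · rw [h]
      have g1 : S (![(0,1), (1,0), (1,0), (1,0), (1,1)] : Fin 5 → Klein) := hstep (![(0,1), (0,1), (0,1), (1,0), (1,1)] : Fin 5 → Klein) hhub (0,1) (1,0) (by decide) (by decide) (by decide) 1 (by decide) (![(0,1), (1,0), (1,0), (1,0), (1,1)] : Fin 5 → Klein) (by decide)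
      have g2 : S (![(0,1), (1,1), (1,0), (1,0), (1,0)] : Fin 5 → Klein) := hstep (![(0,1), (1,0), (1,0), (1,0), (1,1)] : Fin 5 → Klein) g1 (1,0) (1,1) (by decide) (by decide) (by decide) 1 (by decide) (![(0,1), (1,1), (1,0), (1,0), (1,0)] : Fin 5 → Klein) (by decide)
      exact g2
    · rw [h]
      have g1 : S (![(0,1), (0,1), (0,1), (1,1), (1,0)] : Fin 5 → Klein) := hstep (![(0,1), (0,1), (0,1), (1,0), (1,1)] : Fin 5 → Klein) hhub (1,0) (1,1) (by decide) (by decide) (by decide) 3 (by decide) (![(0,1), (0,1), (0,1), (1,1), (1,0)] : Fin 5 → Klein) (by decide)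
      have g2 : S (![(0,1), (1,1), (1,1), (1,1), (1,0)] : Fin 5 → Klein) := hstep (![(0,1), (0,1), (0,1), (1,1), (1,0)] : Fin 5 → Klein) g1 (0,1) (1,1) (by decide) (by decide) (by decide) 1 (by decide) (![(0,1), (1,1), (1,1), (1,1), (1,0)] : Fin 5 → Klein) (by decide)
      exact g2
    · rw [h]
      have g1 : S (![(1,0), (0,1), (0,1), (0,1), (1,1)] : Fin 5 → Klein) := hstep (![(0,1), (0,1), (0,1), (1,0), (1,1)] : Fin 5 → Klein) hhub (0,1) (1,0) (by decide) (by decide) (by decide) 0 (by decide) (![(1,0), (0,1), (0,1), (0,1), (1,1)] : Fin 5 → Klein) (by decide)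
      exact g1
    · rw [h]
      have g1 : S (![(0,1), (0,1), (1,1), (1,0), (0,1)] : Fin 5 → Klein) := hstep (![(0,1), (0,1), (0,1), (1,0), (1,1)] : Fin 5 → Klein) hhub (0,1) (1,1) (by decide) (by decide) (by decide) 2 (by decide) (![(0,1), (0,1), (1,1), (1,0), (0,1)] : Fin 5 → Klein) (by decide)
      have g2 : S (![(1,0), (0,1), (1,1), (1,0), (1,0)] : Fin 5 → Klein) := hstep (![(0,1), (0,1), (1,1), (1,0), (0,1)] : Fin 5 → Klein) g1 (0,1) (1,0) (by decide) (by decide) (by decide) 0 (by decide) (![(1,0), (0,1), (1,1), (1,0), (1,0)] : Fin 5 → Klein) (by decide)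
      exact g2
    · rw [h]
      have g1 : S (![(1,0), (0,1), (0,1), (0,1), (1,1)] : Fin 5 → Klein) := hstep (![(0,1), (0,1), (0,1), (1,0), (1,1)] : Fin 5 → Klein) hhub (0,1) (1,0) (by decide) (by decide) (by decide) 0 (by decide) (![(1,0), (0,1), (0,1), (0,1), (1,1)] : Fin 5 → Klein) (by decide)
      have g2 : S (![(1,0), (0,1), (1,1), (1,1), (1,1)] : Fin 5 → Klein) := hstep (![(1,0), (0,1), (0,1), (0,1), (1,1)] : Fin 5 → Klein) g1 (0,1) (1,1) (by decide) (by decide) (by decide) 2 (by decide) (![(1,0), (0,1), (1,1), (1,1), (1,1)] : Fin 5 → Klein) (by decide)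
      exact g2
    · rw [h]
      have g1 : S (![(0,1), (0,1), (0,1), (1,1), (1,0)] : Fin 5 → Klein) := hstep (![(0,1), (0,1), (0,1), (1,0), (1,1)] : Fin 5 → Klein) hhub (1,0) (1,1) (by decide) (by decide) (by decide) 3 (by decide) (![(0,1), (0,1), (0,1), (1,1), (1,0)] : Fin 5 → Klein) (by decide)
      have g2 : S (![(1,0), (1,0), (0,1), (1,1), (1,0)] : Fin 5 → Klein) := hstep (![(0,1), (0,1), (0,1), (1,1), (1,0)] : Fin 5 → Klein) g1 (0,1) (1,0) (by decide) (by decide) (by decide) 0 (by decide) (![(1,0), (1,0), (0,1), (1,1), (1,0)] : Fin 5 → Klein) (by decide)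
      exact g2
    · rw [h]
      have g1 : S (![(1,0), (0,1), (0,1), (0,1), (1,1)] : Fin 5 → Klein) := hstep (![(0,1), (0,1), (0,1), (1,0), (1,1)] : Fin 5 → Klein) hhub (0,1) (1,0) (by decide) (by decide) (by decide) 0 (by decide) (![(1,0), (0,1), (0,1), (0,1), (1,1)] : Fin 5 → Klein) (by decide)
      have g2 : S (![(1,0), (1,0), (1,0), (0,1), (1,1)] : Fin 5 → Klein) := hstep (![(1,0), (0,1), (0,1), (0,1), (1,1)] : Fin 5 → Klein) g1 (0,1) (1,0) (by decide) (by decide) (by decide) 1 (by decide) (![(1,0), (1,0), (1,0), (0,1), (1,1)] : Fin 5 → Klein) (by decide)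
      exact g2
    · rw [h]
      have g1 : S (![(1,0), (0,1), (0,1), (0,1), (1,1)] : Fin 5 → Klein) := hstep (![(0,1), (0,1), (0,1), (1,0), (1,1)] : Fin 5 → Klein) hhub (0,1) (1,0) (by decide) (by decide) (by decide) 0 (by decide) (![(1,0), (0,1), (0,1), (0,1), (1,1)] : Fin 5 → Klein) (by decide)
      have g2 : S (![(1,0), (1,0), (1,0), (0,1), (1,1)] : Fin 5 → Klein) := hstep (![(1,0), (0,1), (0,1), (0,1), (1,1)] : Fin 5 → Klein) g1 (0,1) (1,0) (by decide) (by decide) (by decide) 1 (by decide) (![(1,0), (1,0), (1,0), (0,1), (1,1)] : Fin 5 → Klein) (by decide)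
      have g3 : S (![(1,0), (1,0), (1,0), (1,1), (0,1)] : Fin 5 → Klein) := hstep (![(1,0), (1,0), (1,0), (0,1), (1,1)] : Fin 5 → Klein) g2 (0,1) (1,1) (by decide) (by decide) (by decide) 3 (by decide) (![(1,0), (1,0), (1,0), (1,1), (0,1)] : Fin 5 → Klein) (by decide)
      exact g3
    · rw [h]
      have g1 : S (![(1,0), (0,1), (0,1), (0,1), (1,1)] : Fin 5 → Klein) := hstep (![(0,1), (0,1), (0,1), (1,0), (1,1)] : Fin 5 → Klein) hhub (0,1) (1,0) (by decide) (by decide) (by decide) 0 (by decide) (![(1,0), (0,1), (0,1), (0,1), (1,1)] : Fin 5 → Klein) (by decide)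
      have g2 : S (![(1,0), (1,0), (1,0), (0,1), (1,1)] : Fin 5 → Klein) := hstep (![(1,0), (0,1), (0,1), (0,1), (1,1)] : Fin 5 → Klein) g1 (0,1) (1,0) (by decide) (by decide) (by decide) 1 (by decide) (![(1,0), (1,0), (1,0), (0,1), (1,1)] : Fin 5 → Klein) (by decide)
      have g3 : S (![(1,0), (1,0), (1,1), (0,1), (1,0)] : Fin 5 → Klein) := hstep (![(1,0), (1,0), (1,0), (0,1), (1,1)] : Fin 5 → Klein) g2 (1,0) (1,1) (by decide) (by decide) (by decide) 2 (by decide) (![(1,0), (1,0), (1,1), (0,1), (1,0)] : Fin 5 → Klein) (by decide)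
      exact g3
    · rw [h]
      have g1 : S (![(1,0), (0,1), (0,1), (0,1), (1,1)] : Fin 5 → Klein) := hstep (![(0,1), (0,1), (0,1), (1,0), (1,1)] : Fin 5 → Klein) hhub (0,1) (1,0) (by decide) (by decide) (by decide) 0 (by decide) (![(1,0), (0,1), (0,1), (0,1), (1,1)] : Fin 5 → Klein) (by decide)
      have g2 : S (![(1,0), (1,1), (0,1), (0,1), (0,1)] : Fin 5 → Klein) := hstep (![(1,0), (0,1), (0,1), (0,1), (1,1)] : Fin 5 → Klein) g1 (0,1) (1,1) (by decide) (by decide) (by decide) 1 (by decide) (![(1,0), (1,1), (0,1), (0,1), (0,1)] : Fin 5 → Klein) (by decide)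
      exact g2
    · rw [h]
      have g1 : S (![(1,1), (1,1), (0,1), (1,0), (1,1)] : Fin 5 → Klein) := hstep (![(0,1), (0,1), (0,1), (1,0), (1,1)] : Fin 5 → Klein) hhub (0,1) (1,1) (by decide) (by decide) (by decide) 0 (by decide) (![(1,1), (1,1), (0,1), (1,0), (1,1)] : Fin 5 → Klein) (by decide)
      have g2 : S (![(1,0), (1,1), (0,1), (1,0), (1,0)] : Fin 5 → Klein) := hstep (![(1,1), (1,1), (0,1), (1,0), (1,1)] : Fin 5 → Klein) g1 (1,0) (1,1) (by decide) (by decide) (by decide) 0 (by decide) (![(1,0), (1,1), (0,1), (1,0), (1,0)] : Fin 5 → Klein) (by decide)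
      exact g2
    · rw [h]
      have g1 : S (![(1,0), (0,1), (0,1), (0,1), (1,1)] : Fin 5 → Klein) := hstep (![(0,1), (0,1), (0,1), (1,0), (1,1)] : Fin 5 → Klein) hhub (0,1) (1,0) (by decide) (by decide) (by decide) 0 (by decide) (![(1,0), (0,1), (0,1), (0,1), (1,1)] : Fin 5 → Klein) (by decide)
      have g2 : S (![(1,0), (1,1), (0,1), (0,1), (0,1)] : Fin 5 → Klein) := hstep (![(1,0), (0,1), (0,1), (0,1), (1,1)] : Fin 5 → Klein) g1 (0,1) (1,1) (by decide) (by decide) (by decide) 1 (by decide) (![(1,0), (1,1), (0,1), (0,1), (0,1)] : Fin 5 → Klein) (by decide)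
      have g3 : S (![(1,0), (1,1), (1,1), (1,1), (0,1)] : Fin 5 → Klein) := hstep (![(1,0), (1,1), (0,1), (0,1), (0,1)] : Fin 5 → Klein) g2 (0,1) (1,1) (by decide) (by decide) (by decide) 2 (by decide) (![(1,0), (1,1), (1,1), (1,1), (0,1)] : Fin 5 → Klein) (by decide)
      exact g3
    · rw [h]
      have g1 : S (![(1,0), (0,1), (0,1), (0,1), (1,1)] : Fin 5 → Klein) := hstep (![(0,1), (0,1), (0,1), (1,0), (1,1)] : Fin 5 → Klein) hhub (0,1) (1,0) (by decide) (by decide) (by decide) 0 (by decide) (![(1,0), (0,1), (0,1), (0,1), (1,1)] : Fin 5 → Klein) (by decide)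
      have g2 : S (![(1,1), (0,1), (0,1), (0,1), (1,0)] : Fin 5 → Klein) := hstep (![(1,0), (0,1), (0,1), (0,1), (1,1)] : Fin 5 → Klein) g1 (1,0) (1,1) (by decide) (by decide) (by decide) 0 (by decide) (![(1,1), (0,1), (0,1), (0,1), (1,0)] : Fin 5 → Klein) (by decide)
      exact g2
    · rw [h]
      have g1 : S (![(1,0), (0,1), (0,1), (0,1), (1,1)] : Fin 5 → Klein) := hstep (![(0,1), (0,1), (0,1), (1,0), (1,1)] : Fin 5 → Klein) hhub (0,1) (1,0) (by decide) (by decide) (by decide) 0 (by decide) (![(1,0), (0,1), (0,1), (0,1), (1,1)] : Fin 5 → Klein) (by decide)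
      have g2 : S (![(1,1), (0,1), (0,1), (0,1), (1,0)] : Fin 5 → Klein) := hstep (![(1,0), (0,1), (0,1), (0,1), (1,1)] : Fin 5 → Klein) g1 (1,0) (1,1) (by decide) (by decide) (by decide) 0 (by decide) (![(1,1), (0,1), (0,1), (0,1), (1,0)] : Fin 5 → Klein) (by decide)
      have g3 : S (![(1,1), (0,1), (1,0), (1,0), (1,0)] : Fin 5 → Klein) := hstep (![(1,1), (0,1), (0,1), (0,1), (1,0)] : Fin 5 → Klein) g2 (0,1) (1,0) (by decide) (by decide) (by decide) 2 (by decide) (![(1,1), (0,1), (1,0), (1,0), (1,0)] : Fin 5 → Klein) (by decide)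
      exact g3
    · rw [h]
      have g1 : S (![(1,0), (0,1), (0,1), (0,1), (1,1)] : Fin 5 → Klein) := hstep (![(0,1), (0,1), (0,1), (1,0), (1,1)] : Fin 5 → Klein) hhub (0,1) (1,0) (by decide) (by decide) (by decide) 0 (by decide) (![(1,0), (0,1), (0,1), (0,1), (1,1)] : Fin 5 → Klein) (by decide)
      have g2 : S (![(1,0), (0,1), (1,1), (1,1), (1,1)] : Fin 5 → Klein) := hstep (![(1,0), (0,1), (0,1), (0,1), (1,1)] : Fin 5 → Klein) g1 (0,1) (1,1) (by decide) (by decide) (by decide) 2 (by decide) (![(1,0), (0,1), (1,1), (1,1), (1,1)] : Fin 5 → Klein) (by decide)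
      have g3 : S (![(1,1), (0,1), (1,0), (1,1), (1,1)] : Fin 5 → Klein) := hstep (![(1,0), (0,1), (1,1), (1,1), (1,1)] : Fin 5 → Klein) g2 (1,0) (1,1) (by decide) (by decide) (by decide) 0 (by decide) (![(1,1), (0,1), (1,0), (1,1), (1,1)] : Fin 5 → Klein) (by decide)
      exact g3
    · rw [h]
      have g1 : S (![(1,0), (0,1), (0,1), (0,1), (1,1)] : Fin 5 → Klein) := hstep (![(0,1), (0,1), (0,1), (1,0), (1,1)] : Fin 5 → Klein) hhub (0,1) (1,0) (by decide) (by decide) (by decide) 0 (by decide) (![(1,0), (0,1), (0,1), (0,1), (1,1)] : Fin 5 → Klein) (by decide)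
      have g2 : S (![(1,0), (1,1), (0,1), (0,1), (0,1)] : Fin 5 → Klein) := hstep (![(1,0), (0,1), (0,1), (0,1), (1,1)] : Fin 5 → Klein) g1 (0,1) (1,1) (by decide) (by decide) (by decide) 1 (by decide) (![(1,0), (1,1), (0,1), (0,1), (0,1)] : Fin 5 → Klein) (by decide)
      have g3 : S (![(1,1), (1,0), (0,1), (0,1), (0,1)] : Fin 5 → Klein) := hstep (![(1,0), (1,1), (0,1), (0,1), (0,1)] : Fin 5 → Klein) g2 (1,0) (1,1) (by decide) (by decide) (by decide) 0 (by decide) (![(1,1), (1,0), (0,1), (0,1), (0,1)] : Fin 5 → Klein) (by decide)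
      exact g3
    · rw [h]
      have g1 : S (![(1,1), (1,1), (0,1), (1,0), (1,1)] : Fin 5 → Klein) := hstep (![(0,1), (0,1), (0,1), (1,0), (1,1)] : Fin 5 → Klein) hhub (0,1) (1,1) (by decide) (by decide) (by decide) 0 (by decide) (![(1,1), (1,1), (0,1), (1,0), (1,1)] : Fin 5 → Klein) (by decide)
      have g2 : S (![(1,1), (1,0), (0,1), (1,1), (1,1)] : Fin 5 → Klein) := hstep (![(1,1), (1,1), (0,1), (1,0), (1,1)] : Fin 5 → Klein) g1 (1,0) (1,1) (by decide) (by decide) (by decide) 1 (by decide) (![(1,1), (1,0), (0,1), (1,1), (1,1)] : Fin 5 → Klein) (by decide)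
      exact g2
    · rw [h]
      have g1 : S (![(0,1), (1,0), (1,0), (1,0), (1,1)] : Fin 5 → Klein) := hstep (![(0,1), (0,1), (0,1), (1,0), (1,1)] : Fin 5 → Klein) hhub (0,1) (1,0) (by decide) (by decide) (by decide) 1 (by decide) (![(0,1), (1,0), (1,0), (1,0), (1,1)] : Fin 5 → Klein) (by decide)
      have g2 : S (![(1,1), (1,0), (1,0), (1,0), (0,1)] : Fin 5 → Klein) := hstep (![(0,1), (1,0), (1,0), (1,0), (1,1)] : Fin 5 → Klein) g1 (0,1) (1,1) (by decide) (by decide) (by decide) 0 (by decide) (![(1,1), (1,0), (1,0), (1,0), (0,1)] : Fin 5 → Klein) (by decide)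
      exact g2
    · rw [h]
      have g1 : S (![(1,1), (1,1), (0,1), (1,0), (1,1)] : Fin 5 → Klein) := hstep (![(0,1), (0,1), (0,1), (1,0), (1,1)] : Fin 5 → Klein) hhub (0,1) (1,1) (by decide) (by decide) (by decide) 0 (by decide) (![(1,1), (1,1), (0,1), (1,0), (1,1)] : Fin 5 → Klein) (by decide)
      exact g1
    · rw [h]
      have g1 : S (![(1,1), (1,1), (0,1), (1,0), (1,1)] : Fin 5 → Klein) := hstep (![(0,1), (0,1), (0,1), (1,0), (1,1)] : Fin 5 → Klein) hhub (0,1) (1,1) (by decide) (by decide) (by decide) 0 (by decide) (![(1,1), (1,1), (0,1), (1,0), (1,1)] : Fin 5 → Klein) (by decide)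
      have g2 : S (![(1,1), (1,1), (1,0), (0,1), (1,1)] : Fin 5 → Klein) := hstep (![(1,1), (1,1), (0,1), (1,0), (1,1)] : Fin 5 → Klein) g1 (0,1) (1,0) (by decide) (by decide) (by decide) 2 (by decide) (![(1,1), (1,1), (1,0), (0,1), (1,1)] : Fin 5 → Klein) (by decide)
      exact g2
    · rw [h]
      have g1 : S (![(1,0), (0,1), (0,1), (0,1), (1,1)] : Fin 5 → Klein) := hstep (![(0,1), (0,1), (0,1), (1,0), (1,1)] : Fin 5 → Klein) hhub (0,1) (1,0) (by decide) (by decide) (by decide) 0 (by decide) (![(1,0), (0,1), (0,1), (0,1), (1,1)] : Fin 5 → Klein) (by decide)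
      have g2 : S (![(1,1), (0,1), (0,1), (0,1), (1,0)] : Fin 5 → Klein) := hstep (![(1,0), (0,1), (0,1), (0,1), (1,1)] : Fin 5 → Klein) g1 (1,0) (1,1) (by decide) (by decide) (by decide) 0 (by decide) (![(1,1), (0,1), (0,1), (0,1), (1,0)] : Fin 5 → Klein) (by decide)
      have g3 : S (![(1,1), (1,1), (1,1), (0,1), (1,0)] : Fin 5 → Klein) := hstep (![(1,1), (0,1), (0,1), (0,1), (1,0)] : Fin 5 → Klein) g2 (0,1) (1,1) (by decide) (by decide) (by decide) 1 (by decide) (![(1,1), (1,1), (1,1), (0,1), (1,0)] : Fin 5 → Klein) (by decide)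
      exact g3
    · rw [h]
      have g1 : S (![(1,1), (1,1), (0,1), (1,0), (1,1)] : Fin 5 → Klein) := hstep (![(0,1), (0,1), (0,1), (1,0), (1,1)] : Fin 5 → Klein) hhub (0,1) (1,1) (by decide) (by decide) (by decide) 0 (by decide) (![(1,1), (1,1), (0,1), (1,0), (1,1)] : Fin 5 → Klein) (by decide)
      have g2 : S (![(1,1), (1,1), (1,1), (1,0), (0,1)] : Fin 5 → Klein) := hstep (![(1,1), (1,1), (0,1), (1,0), (1,1)] : Fin 5 → Klein) g1 (0,1) (1,1) (by decide) (by decide) (by decide) 2 (by decide) (![(1,1), (1,1), (1,1), (1,0), (0,1)] : Fin 5 → Klein) (by decide)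
      exact g2
  intro t
  exact ⟨fun h => hsub t h, fun h => hall t h⟩
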